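/- Assume the uniform symmetric grid and let Θ ⊆ [θ̲, θ̄] be nonempty, compact and signed-permutation invariant, and let ψ̌ satisfy 0 ≤ ψ̌_{ij} ≤ z_j − z_{j−1} for all i ∈ [I], j ∈ [J]. Then the separation problem max over grid rectangles [z⁻,z⁺] of d'(ψ̌, [z⁻,z⁺]) − d̄(Θ, [z⁻,z⁺]) admits a maximizer that is symmetric around the origin, i.e., a maximizer with z⁻ = −z⁺. -/
import Mathlib

/-- `Θ` is invariant under signed permutations of the coordinates. -/
def SignedPermInvariant (I : ℕ) (Θ : Set (Fin I → ℝ)) : Prop :=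
  ∀ (σ : Equiv.Perm (Fin I)) (ε : Fin I → ℝ), (∀ i, ε i = 1 ∨ ε i = -1) →
    ∀ θ ∈ Θ, (fun i => ε i * θ (σ i)) ∈ Θ

/-- ℓ1-distance from a point to the box `[zm, zp]`. -/
noncomputable def l1dist (I : ℕ) (θ zm zp : Fin I → ℝ) : ℝ :=
  sInf ((fun θ' => ∑ i, |θ i - θ' i|) '' Set.Icc zm zp)

/-- Maximal ℓ1-distance from `Θ` to the box `[zm, zp]`. -/
noncomputable def dbar (I : ℕ) (Θ : Set (Fin I → ℝ)) (zm zp : Fin I → ℝ) : ℝ :=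
  sSup ((fun θ => l1dist I θ zm zp) '' Θ)

/-- The linear distance `d'(ψ̌, [z⁻, z⁺])` for the uniform grid. -/
noncomputable def dlinU (I J : ℕ) (z : ℕ → ℝ) (ψ : Fin I → Fin J → ℝ)
    (zm zp : Fin I → ℝ) : ℝ :=
  ∑ i, ((∑ j ∈ Finset.univ.filter (fun j : Fin J => zp i < z (j.val + 1)), ψ i j)
    + zm i - z 0
    - ∑ j ∈ Finset.univ.filter (fun j : Fin J => z (j.val + 1) ≤ zm i), ψ i j)

/-- `[zm, zp]` is a grid rectangle for the uniform grid. -/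
def GridRectU (I J : ℕ) (z : ℕ → ℝ) (zm zp : Fin I → ℝ) : Prop :=
  zm ≤ zp ∧ (∀ i, ∃ k ≤ J, zm i = z k) ∧ (∀ i, ∃ k ≤ J, zp i = z k)

/- ### Auxiliary definitions -/

/-- ψ reindexed over ℕ, extended by `0`. -/
noncomputable def PsiN (I J : ℕ) (ψ : Fin I → Fin J → ℝ) (i : Fin I) (j : ℕ) : ℝ :=
  if h : j < J then ψ i ⟨j, h⟩ else 0

/-- per-coordinate score of `dlinU` with grid indices `k ≤ l`. -/
noncomputable def sc (I J : ℕ) (z : ℕ → ℝ) (ψ : Fin I → Fin J → ℝ)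
    (i : Fin I) (k l : ℕ) : ℝ :=
  (∑ j ∈ Finset.Ico l J, PsiN I J ψ i j) + z k - z 0 - ∑ j ∈ Finset.range k, PsiN I J ψ i j

lemma zsub_eq_sum (z : ℕ → ℝ) {a b : ℕ} (hab : a ≤ b) :
    z b - z a = ∑ j ∈ Finset.Ico a b, (z (j + 1) - z j) := by
  rw [Finset.sum_Ico_eq_sub _ hab, Finset.sum_range_sub (fun n => z n),
    Finset.sum_range_sub (fun n => z n)]
  ring

lemma zmono (J : ℕ) (z : ℕ → ℝ) (hz : ∀ j < J, z j < z (j + 1))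
    {a b : ℕ} (hab : a ≤ b) (hb : b ≤ J) : z a ≤ z b := by
  have h := zsub_eq_sum z hab
  have : 0 ≤ ∑ j ∈ Finset.Ico a b, (z (j + 1) - z j) := by
    refine Finset.sum_nonneg fun j hj => ?_
    have hj' := Finset.mem_Ico.mp hj
    exact le_of_lt (sub_pos.mpr (hz j (by omega)))
  linarith

lemma zstrict (J : ℕ) (z : ℕ → ℝ) (hz : ∀ j < J, z j < z (j + 1))
    {a b : ℕ} (hab : a < b) (hb : b ≤ J) : z a < z b := by
  have h := zsub_eq_sum z (le_of_lt hab)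
  have : 0 < ∑ j ∈ Finset.Ico a b, (z (j + 1) - z j) := by
    refine Finset.sum_pos (fun j hj => ?_) (Finset.nonempty_Ico.mpr hab)
    have hj' := Finset.mem_Ico.mp hj
    exact sub_pos.mpr (hz j (by omega))
  linarith

lemma sum_filter_ge (I J : ℕ) (ψ : Fin I → Fin J → ℝ) (i : Fin I) (m : ℕ) (hm : m ≤ J) :
    ∑ j ∈ Finset.univ.filter (fun j : Fin J => m ≤ j.val), ψ i j
      = ∑ j ∈ Finset.Ico m J, PsiN I J ψ i j := by
  rw [Finset.sum_filter]
  have h1 : ∀ j : Fin J, (if m ≤ j.val then ψ i j else 0)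
      = (fun n => if m ≤ n then PsiN I J ψ i n else 0) j.val := by
    intro j
    simp only [PsiN, j.isLt, dif_pos, Fin.eta]
  calc ∑ j : Fin J, (if m ≤ j.val then ψ i j else 0)
      = ∑ j : Fin J, (fun n => if m ≤ n then PsiN I J ψ i n else 0) j.val :=
        Finset.sum_congr rfl fun j _ => h1 j
    _ = ∑ j ∈ Finset.range J, (if m ≤ j then PsiN I J ψ i j else 0) :=
        Fin.sum_univ_eq_sum_range (fun n => if m ≤ n then PsiN I J ψ i n else 0) J
    _ = ∑ j ∈ (Finset.range J).filter (fun j => m ≤ j), PsiN I J ψ i j :=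
        (Finset.sum_filter _ _).symm
    _ = ∑ j ∈ Finset.Ico m J, PsiN I J ψ i j := by
        congr 1
        ext x
        simp only [Finset.mem_filter, Finset.mem_range, Finset.mem_Ico]
        omega

lemma sum_filter_lt (I J : ℕ) (ψ : Fin I → Fin J → ℝ) (i : Fin I) (m : ℕ) (hm : m ≤ J) :
    ∑ j ∈ Finset.univ.filter (fun j : Fin J => j.val < m), ψ i j
      = ∑ j ∈ Finset.range m, PsiN I J ψ i j := by
  rw [Finset.sum_filter]
  have h1 : ∀ j : Fin J, (if j.val < m then ψ i j else 0)
      = (fun n => if n < m then PsiN I J ψ i n else 0) j.val := by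
    intro j
    simp only [PsiN, j.isLt, dif_pos, Fin.eta]
  calc ∑ j : Fin J, (if j.val < m then ψ i j else 0)
      = ∑ j : Fin J, (fun n => if n < m then PsiN I J ψ i n else 0) j.val :=
        Finset.sum_congr rfl fun j _ => h1 j
    _ = ∑ j ∈ Finset.range J, (if j < m then PsiN I J ψ i j else 0) :=
        Fin.sum_univ_eq_sum_range (fun n => if n < m then PsiN I J ψ i n else 0) J
    _ = ∑ j ∈ (Finset.range J).filter (fun j => j < m), PsiN I J ψ i j :=
        (Finset.sum_filter _ _).symm
    _ = ∑ j ∈ Finset.range m, PsiN I J ψ i j := by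
        congr 1
        ext x
        simp only [Finset.mem_filter, Finset.mem_range]
        omega

lemma dlin_eq (I J : ℕ) (z : ℕ → ℝ) (hz : ∀ j < J, z j < z (j + 1))
    (ψ : Fin I → Fin J → ℝ) (k l : Fin I → ℕ) (hk : ∀ i, k i ≤ J) (hl : ∀ i, l i ≤ J) :
    dlinU I J z ψ (fun i => z (k i)) (fun i => z (l i)) = ∑ i, sc I J z ψ i (k i) (l i) := by
  unfold dlinU sc
  refine Finset.sum_congr rfl fun i _ => ?_
  have e1 : Finset.univ.filter (fun j : Fin J => z (l i) < z (j.val + 1))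
      = Finset.univ.filter (fun j : Fin J => l i ≤ j.val) := by
    refine Finset.filter_congr fun j _ => ?_
    constructor
    · intro h
      by_contra h'
      push_neg at h'
      have : z (j.val + 1) ≤ z (l i) := zmono J z hz (by omega) (hl i)
      linarith
    · intro h
      exact zstrict J z hz (by omega) (by have := j.isLt; omega)
  have e3 : Finset.univ.filter (fun j : Fin J => z (j.val + 1) ≤ z (k i))
      = Finset.univ.filter (fun j : Fin J => j.val < k i) := by
    refine Finset.filter_congr fun j _ => ?_
    constructor
    · intro h
      by_contra h'
      push_neg at h'
      have : z (k i) < z (j.val + 1) := zstrict J z hz (by omega) (by have := j.isLt; omega)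
      linarith
    · intro h
      exact zmono J z hz (by omega) (hk i)
  rw [e1, e3, sum_filter_ge I J ψ i (l i) (hl i), sum_filter_lt I J ψ i (k i) (hk i)]
lemma clamp_abs (a b t : ℝ) (hab : a ≤ b) :
    |t - max a (min t b)| = max (a - t) 0 + max (t - b) 0 := by
  rcases le_total t a with h | h
  · rw [min_eq_left (le_trans h hab), max_eq_left h, max_eq_left (by linarith : (0:ℝ) ≤ a - t),
      max_eq_right (by linarith : t - b ≤ 0), abs_of_nonpos (by linarith)]
    ring
  · rcases le_total t b with h' | h'
    · rw [min_eq_left h', max_eq_right h, max_eq_right (by linarith : a - t ≤ 0),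
        max_eq_right (by linarith : t - b ≤ 0), sub_self, abs_zero]
      ring
    · rw [min_eq_right h', max_eq_right hab, max_eq_right (by linarith : a - t ≤ 0),
        max_eq_left (by linarith : (0:ℝ) ≤ t - b), abs_of_nonneg (by linarith)]
      ring

lemma clamp_min (a b t x : ℝ) (ha : a ≤ x) (hb : x ≤ b) :
    max (a - t) 0 + max (t - b) 0 ≤ |t - x| := by
  rcases le_total t x with h | h
  · rw [max_eq_right (by linarith : t - b ≤ 0), abs_of_nonpos (by linarith)]
    have : max (a - t) 0 ≤ x - t := max_le (by linarith) (by linarith)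
    linarith
  · rw [max_eq_right (by linarith : a - t ≤ 0), abs_of_nonneg (by linarith)]
    have : max (t - b) 0 ≤ t - x := max_le (by linarith) (by linarith)
    linarith

lemma l1dist_eq (I : ℕ) (θ zm zp : Fin I → ℝ) (h : zm ≤ zp) :
    l1dist I θ zm zp = ∑ i, (max (zm i - θ i) 0 + max (θ i - zp i) 0) := by
  refine IsLeast.csInf_eq ⟨⟨fun i => max (zm i) (min (θ i) (zp i)), ?_, ?_⟩, ?_⟩
  · refine Set.mem_Icc.mpr ⟨fun i => le_max_left _ _, fun i => max_le (h i) (min_le_right _ _)⟩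
  · exact Finset.sum_congr rfl fun i _ => clamp_abs (zm i) (zp i) (θ i) (h i)
  · rintro y ⟨x, hx, rfl⟩
    exact Finset.sum_le_sum fun i _ => clamp_min (zm i) (zp i) (θ i) (x i) (hx.1 i) (hx.2 i)

lemma dbar_bddAbove (I : ℕ) (Θ : Set (Fin I → ℝ)) (zm zp : Fin I → ℝ) (c C : ℝ)
    (hbox : Θ ⊆ Set.Icc (fun _ => c) (fun _ => C)) (h : zm ≤ zp) :
    BddAbove ((fun θ => l1dist I θ zm zp) '' Θ) := by
  refine ⟨∑ i, (max (zm i - c) 0 + max (C - zp i) 0), ?_⟩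
  rintro y ⟨θ, hθ, rfl⟩
  show l1dist I θ zm zp ≤ _
  rw [l1dist_eq I θ zm zp h]
  refine Finset.sum_le_sum fun i _ => ?_
  have h1 : c ≤ θ i := (hbox hθ).1 i
  have h2 : θ i ≤ C := (hbox hθ).2 i
  have e1 : max (zm i - θ i) 0 ≤ max (zm i - c) 0 := max_le_max (by linarith) le_rfl
  have e2 : max (θ i - zp i) 0 ≤ max (C - zp i) 0 := max_le_max (by linarith) le_rfl
  linarith
theorem stmt_13 (I J : ℕ) (hJeven : Even J) (hJpos : 0 < J)
    (z : ℕ → ℝ) (hz : ∀ j < J, z j < z (j + 1))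
    (hsym : ∀ j ≤ J, z j = -(z (J - j)))
    (Θ : Set (Fin I → ℝ)) (hne : Θ.Nonempty) (hcomp : IsCompact Θ)
    (hSPI : SignedPermInvariant I Θ)
    (hΘbox : Θ ⊆ Set.Icc (fun _ => z 0) (fun _ => z J))
    (ψ : Fin I → Fin J → ℝ)
    (hψ : ∀ i j, 0 ≤ ψ i j ∧ ψ i j ≤ z (j.val + 1) - z j.val) :
    ∃ zm zp : Fin I → ℝ, GridRectU I J z zm zp ∧
      (∀ i, zm i = -(zp i)) ∧
      ∀ zm' zp' : Fin I → ℝ, GridRectU I J z zm' zp' →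
        dlinU I J z ψ zm' zp' - dbar I Θ zm' zp' ≤
          dlinU I J z ψ zm zp - dbar I Θ zm zp := by
  classical
  obtain ⟨h2, hh2⟩ := hJeven
  have hh2J : h2 ≤ J := by omega
  have hJh2 : J - h2 = h2 := by omega
  have hz0 : z h2 = 0 := by
    have := hsym h2 hh2J
    rw [hJh2] at this
    linarith
  have zrev : ∀ j ≤ J, z (J - j) = -(z j) := by
    intro j hj
    have := hsym j hj
    linarith
  have psN0 : ∀ (i : Fin I) (j : ℕ), 0 ≤ PsiN I J ψ i j := by
    intro i j
    unfold PsiN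
    split
    · exact (hψ i _).1
    · exact le_refl 0
  have psNle : ∀ (i : Fin I) (j : ℕ), j < J → PsiN I J ψ i j ≤ z (j + 1) - z j := by
    intro i j hj
    unfold PsiN
    rw [dif_pos hj]
    exact (hψ i ⟨j, hj⟩).2
  haveI : Nonempty (Fin I → Fin (J + 1)) := ⟨fun _ => ⟨0, by omega⟩⟩
  obtain ⟨cs, -, hmax⟩ := Finset.exists_max_image (Finset.univ : Finset (Fin I → Fin (J + 1)))
    (fun c => dlinU I J z ψ (fun i => z (J - max (c i).val (J - (c i).val)))
        (fun i => z (max (c i).val (J - (c i).val)))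
      - dbar I Θ (fun i => z (J - max (c i).val (J - (c i).val)))
        (fun i => z (max (c i).val (J - (c i).val))))
    Finset.univ_nonempty
  have hLJ : ∀ i : Fin I, max (cs i).val (J - (cs i).val) ≤ J := by
    intro i
    have := (cs i).isLt
    omega
  have hLmid : ∀ i : Fin I, J - max (cs i).val (J - (cs i).val) ≤ max (cs i).val (J - (cs i).val) := by
    intro i
    have h1 := le_max_left (cs i).val (J - (cs i).val)
    have h2' := le_max_right (cs i).val (J - (cs i).val)
    have := (cs i).isLt
    omega
  refine ⟨fun i => z (J - max (cs i).val (J - (cs i).val)),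
    fun i => z (max (cs i).val (J - (cs i).val)), ⟨?_, ?_, ?_⟩, ?_, ?_⟩
  · intro i
    exact zmono J z hz (hLmid i) (hLJ i)
  · intro i
    exact ⟨J - max (cs i).val (J - (cs i).val), by omega, rfl⟩
  · intro i
    exact ⟨max (cs i).val (J - (cs i).val), hLJ i, rfl⟩
  · intro i
    exact zrev _ (hLJ i)
  · intro zm' zp' hrect
    obtain ⟨hle, hm, hp⟩ := hrect
    choose k hkJ hkz using hm
    choose l hlJ hlz using hp
    have hzm' : zm' = fun i => z (k i) := funext hkz
    have hzp' : zp' = fun i => z (l i) := funext hlz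
    subst hzm' hzp'
    have hkl : ∀ i, k i ≤ l i := by
      intro i
      by_contra hc
      push_neg at hc
      have h1 := zstrict J z hz hc (hkJ i)
      have h := hle i
      dsimp only at h
      linarith
    -- per-coordinate symmetric replacement
    have key : ∀ i, ∃ li ri, h2 ≤ li ∧ li ≤ J ∧
        sc I J z ψ i (k i) (l i) ≤ sc I J z ψ i (J - li) li + ri ∧
        ∀ t : ℝ, max (z (J - li) - t) 0 + max (t - z li) 0 + ri ≤
          max (max (z (k i) - t) 0 + max (t - z (l i)) 0)
              (max (z (k i) - -t) 0 + max (-t - z (l i)) 0) := by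
      intro i
      by_cases hC : l i ≤ h2
      · -- box below 0 : collapse to {0}
        refine ⟨h2, -(z (l i)), le_refl _, hh2J, ?_, ?_⟩
        · rw [hJh2]
          unfold sc
          have hkh : k i ≤ h2 := le_trans (hkl i) hC
          have e1 : (∑ j ∈ Finset.Ico (l i) h2, PsiN I J ψ i j)
              + (∑ j ∈ Finset.Ico h2 J, PsiN I J ψ i j)
              = ∑ j ∈ Finset.Ico (l i) J, PsiN I J ψ i j :=
            Finset.sum_Ico_consecutive _ hC hh2J
          have e2 : ∑ j ∈ Finset.Ico (k i) h2, PsiN I J ψ i j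
              = (∑ j ∈ Finset.range h2, PsiN I J ψ i j)
                - ∑ j ∈ Finset.range (k i), PsiN I J ψ i j :=
            Finset.sum_Ico_eq_sub _ hkh
          have e3 : z h2 - z (l i) = ∑ j ∈ Finset.Ico (l i) h2, (z (j + 1) - z j) :=
            zsub_eq_sum z hC
          have e4 : z h2 - z (k i) = ∑ j ∈ Finset.Ico (k i) h2, (z (j + 1) - z j) :=
            zsub_eq_sum z hkh
          have b1 : ∑ j ∈ Finset.Ico (l i) h2, PsiN I J ψ i j
              ≤ ∑ j ∈ Finset.Ico (l i) h2, (z (j + 1) - z j) := by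
            refine Finset.sum_le_sum fun j hj => ?_
            have := Finset.mem_Ico.mp hj
            exact psNle i j (by omega)
          have b2 : ∑ j ∈ Finset.Ico (k i) h2, PsiN I J ψ i j
              ≤ ∑ j ∈ Finset.Ico (k i) h2, (z (j + 1) - z j) := by
            refine Finset.sum_le_sum fun j hj => ?_
            have := Finset.mem_Ico.mp hj
            exact psNle i j (by omega)
          linarith
        · intro t
          rw [hJh2, hz0]
          rcases le_total t 0 with ht | ht
          · rw [max_eq_left (show (0:ℝ) ≤ 0 - t by linarith),
              max_eq_right (show t - 0 ≤ (0:ℝ) by linarith)]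
            refine le_trans ?_ (le_max_right _ _)
            have h1 := le_max_left (-t - z (l i)) (0:ℝ)
            have h2' := le_max_right (z (k i) - -t) (0:ℝ)
            linarith
          · rw [max_eq_right (show 0 - t ≤ (0:ℝ) by linarith),
              max_eq_left (show (0:ℝ) ≤ t - 0 by linarith)]
            refine le_trans ?_ (le_max_left _ _)
            have h1 := le_max_left (t - z (l i)) (0:ℝ)
            have h2' := le_max_right (z (k i) - t) (0:ℝ)
            linarith
      · by_cases hD : h2 ≤ k i
        · -- box above 0 : collapse to {0}
          refine ⟨h2, z (k i), le_refl _, hh2J, ?_, ?_⟩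
          · rw [hJh2]
            unfold sc
            have hD2 : h2 ≤ l i := le_trans hD (hkl i)
            have e1 : (∑ j ∈ Finset.Ico h2 (l i), PsiN I J ψ i j)
                + (∑ j ∈ Finset.Ico (l i) J, PsiN I J ψ i j)
                = ∑ j ∈ Finset.Ico h2 J, PsiN I J ψ i j :=
              Finset.sum_Ico_consecutive _ hD2 (hlJ i)
            have e2 : ∑ j ∈ Finset.Ico h2 (k i), PsiN I J ψ i j
                = (∑ j ∈ Finset.range (k i), PsiN I J ψ i j)
                  - ∑ j ∈ Finset.range h2, PsiN I J ψ i j :=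
              Finset.sum_Ico_eq_sub _ hD
            have b1 : (0:ℝ) ≤ ∑ j ∈ Finset.Ico h2 (l i), PsiN I J ψ i j :=
              Finset.sum_nonneg fun j _ => psN0 i j
            have b2 : (0:ℝ) ≤ ∑ j ∈ Finset.Ico h2 (k i), PsiN I J ψ i j :=
              Finset.sum_nonneg fun j _ => psN0 i j
            linarith
          · intro t
            rw [hJh2, hz0]
            rcases le_total t 0 with ht | ht
            · rw [max_eq_left (show (0:ℝ) ≤ 0 - t by linarith),
                max_eq_right (show t - 0 ≤ (0:ℝ) by linarith)]
              refine le_trans ?_ (le_max_left _ _)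
              have h1 := le_max_left (z (k i) - t) (0:ℝ)
              have h2' := le_max_right (t - z (l i)) (0:ℝ)
              linarith
            · rw [max_eq_right (show 0 - t ≤ (0:ℝ) by linarith),
                max_eq_left (show (0:ℝ) ≤ t - 0 by linarith)]
              refine le_trans ?_ (le_max_right _ _)
              have h1 := le_max_left (z (k i) - -t) (0:ℝ)
              have h2' := le_max_right (-t - z (l i)) (0:ℝ)
              linarith
        · by_cases hA : k i ≤ J - l i
          · -- symmetrize to [-(z l), z l]
            have hl2 : h2 ≤ l i := le_of_lt (lt_of_not_ge hC)
            refine ⟨l i, 0, hl2, hlJ i, ?_, ?_⟩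
            · unfold sc
              have e2 : ∑ j ∈ Finset.Ico (k i) (J - l i), PsiN I J ψ i j
                  = (∑ j ∈ Finset.range (J - l i), PsiN I J ψ i j)
                    - ∑ j ∈ Finset.range (k i), PsiN I J ψ i j :=
                Finset.sum_Ico_eq_sub _ hA
              have e4 : z (J - l i) - z (k i)
                  = ∑ j ∈ Finset.Ico (k i) (J - l i), (z (j + 1) - z j) :=
                zsub_eq_sum z hA
              have b2 : ∑ j ∈ Finset.Ico (k i) (J - l i), PsiN I J ψ i j
                  ≤ ∑ j ∈ Finset.Ico (k i) (J - l i), (z (j + 1) - z j) := by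
                refine Finset.sum_le_sum fun j hj => ?_
                have := Finset.mem_Ico.mp hj
                exact psNle i j (by omega)
              linarith
            · intro t
              have hzl : 0 ≤ z (l i) := by
                have := zmono J z hz hl2 (hlJ i)
                rw [hz0] at this
                exact this
              have hrev : z (J - l i) = -(z (l i)) := zrev (l i) (hlJ i)
              rw [hrev]
              rcases le_total t 0 with ht | ht
              · rw [max_eq_right (show t - z (l i) ≤ (0:ℝ) by linarith)]
                refine le_trans ?_ (le_max_right _ _)
                have h1 : max (-(z (l i)) - t) 0 = max (-t - z (l i)) 0 := by
                  rw [show -(z (l i)) - t = -t - z (l i) from by ring]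
                have h2' := le_max_right (z (k i) - -t) (0:ℝ)
                linarith
              · rw [max_eq_right (show -(z (l i)) - t ≤ (0:ℝ) by linarith)]
                refine le_trans ?_ (le_max_left _ _)
                have h2' := le_max_right (z (k i) - t) (0:ℝ)
                linarith
          · -- symmetrize to [z k, -(z k)]
            have hkh2 : k i < h2 := lt_of_not_ge hD
            have hJlk : J - l i < k i := lt_of_not_ge hA
            have hJkl : J - k i ≤ l i := by
              have := hlJ i
              omega
            refine ⟨J - k i, 0, by omega, by omega, ?_, ?_⟩
            · rw [show J - (J - k i) = k i from by omega]
              unfold sc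
              have e1 : (∑ j ∈ Finset.Ico (J - k i) (l i), PsiN I J ψ i j)
                  + (∑ j ∈ Finset.Ico (l i) J, PsiN I J ψ i j)
                  = ∑ j ∈ Finset.Ico (J - k i) J, PsiN I J ψ i j :=
                Finset.sum_Ico_consecutive _ hJkl (hlJ i)
              have b1 : (0:ℝ) ≤ ∑ j ∈ Finset.Ico (J - k i) (l i), PsiN I J ψ i j :=
                Finset.sum_nonneg fun j _ => psN0 i j
              linarith
            · intro t
              have hzk : z (k i) ≤ 0 := by
                have := zmono J z hz (le_of_lt hkh2) hh2J
                rw [hz0] at this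
                exact this
              have hrev : z (J - (J - k i)) = z (k i) := by
                rw [show J - (J - k i) = k i from by omega]
              have hrev2 : z (J - k i) = -(z (k i)) := zrev (k i) (hkJ i)
              rw [hrev, hrev2]
              rcases le_total t 0 with ht | ht
              · rw [max_eq_right (show t - -(z (k i)) ≤ (0:ℝ) by linarith)]
                refine le_trans ?_ (le_max_left _ _)
                have h2' := le_max_right (t - z (l i)) (0:ℝ)
                linarith
              · rw [max_eq_right (show z (k i) - t ≤ (0:ℝ) by linarith)]
                refine le_trans ?_ (le_max_right _ _)
                have h1 : max (t - -(z (k i))) 0 = max (z (k i) - -t) 0 := by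
                  rw [show t - -(z (k i)) = z (k i) - -t from by ring]
                have h2' := le_max_right (-t - z (l i)) (0:ℝ)
                linarith
    choose l' r hl'1 hl'2 hdlin hdist using key
    have hl'mid : ∀ i, J - l' i ≤ l' i := by
      intro i
      have := hl'1 i
      have := hl'2 i
      omega
    have hSle : (fun i => z (J - l' i)) ≤ fun i => z (l' i) := by
      intro i
      exact zmono J z hz (hl'mid i) (hl'2 i)
    have hBle : (fun i => z (k i)) ≤ fun i => z (l i) := hle
    -- dbar comparison
    have hdbarS : dbar I Θ (fun i => z (J - l' i)) (fun i => z (l' i))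
        ≤ dbar I Θ (fun i => z (k i)) (fun i => z (l i)) - ∑ i, r i := by
      unfold dbar
      refine csSup_le (hne.image _) ?_
      rintro y ⟨θ, hθ, rfl⟩
      set ε : Fin I → ℝ := fun i =>
        if (max (z (k i) - θ i) 0 + max (θ i - z (l i)) 0)
            ≤ (max (z (k i) - -θ i) 0 + max (-θ i - z (l i)) 0) then -1 else 1 with hεdef
      have hε1 : ∀ i, ε i = 1 ∨ ε i = -1 := by
        intro i
        simp only [hεdef]
        split
        · exact Or.inr rfl
        · exact Or.inl rfl
      have hθ' : (fun i => ε i * θ i) ∈ Θ := by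
        have := hSPI (Equiv.refl _) ε hε1 θ hθ
        simpa using this
      have hub := le_csSup (dbar_bddAbove I Θ (fun i => z (k i)) (fun i => z (l i))
        (z 0) (z J) hΘbox hBle) (Set.mem_image_of_mem (fun θ => l1dist I θ (fun i => z (k i)) (fun i => z (l i))) hθ')
      dsimp only at hub ⊢
      rw [l1dist_eq I (fun i => ε i * θ i) _ _ hBle] at hub
      rw [l1dist_eq I θ _ _ hSle]
      have hco : ∀ i ∈ Finset.univ, max (z (J - l' i) - θ i) 0 + max (θ i - z (l' i)) 0 + r i
          ≤ max (z (k i) - ε i * θ i) 0 + max (ε i * θ i - z (l i)) 0 := by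
        intro i _
        have hd := hdist i (θ i)
        by_cases hc : (max (z (k i) - θ i) 0 + max (θ i - z (l i)) 0)
            ≤ (max (z (k i) - -θ i) 0 + max (-θ i - z (l i)) 0)
        · have hεi : ε i = -1 := by
            simp only [hεdef]
            rw [if_pos hc]
          rw [hεi, neg_one_mul]
          rw [max_eq_right hc] at hd
          exact hd
        · have hεi : ε i = 1 := by
            simp only [hεdef]
            rw [if_neg hc]
          rw [hεi, one_mul]
          rw [max_eq_left (le_of_not_ge hc)] at hd
          exact hd
      have hsum := Finset.sum_le_sum hco
      rw [Finset.sum_add_distrib] at hsum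
      linarith
    have hdlinB := dlin_eq I J z hz ψ k l hkJ hlJ
    have hdlinS := dlin_eq I J z hz ψ (fun i => J - l' i) l' (fun i => Nat.sub_le J (l' i)) hl'2
    have hstep : dlinU I J z ψ (fun i => z (k i)) (fun i => z (l i))
          - dbar I Θ (fun i => z (k i)) (fun i => z (l i))
        ≤ dlinU I J z ψ (fun i => z (J - l' i)) (fun i => z (l' i))
          - dbar I Θ (fun i => z (J - l' i)) (fun i => z (l' i)) := by
      rw [hdlinB, hdlinS]
      have h1 : ∑ i, sc I J z ψ i (k i) (l i)
          ≤ ∑ i, (sc I J z ψ i (J - l' i) (l' i) + r i) :=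
        Finset.sum_le_sum fun i _ => hdlin i
      rw [Finset.sum_add_distrib] at h1
      linarith
    refine le_trans hstep ?_
    have hmc := hmax (fun i => (⟨l' i, Nat.lt_succ_of_le (hl'2 i)⟩ : Fin (J + 1)))
      (Finset.mem_univ _)
    dsimp only at hmc
    have e2 : (fun i => z (max (l' i) (J - l' i))) = fun i => z (l' i) :=
      funext fun i => by rw [max_eq_left (hl'mid i)]
    have e3 : (fun i => z (J - max (l' i) (J - l' i))) = fun i => z (J - l' i) :=
      funext fun i => by rw [max_eq_left (hl'mid i)]
    rw [e2, e3] at hmc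
    exact hmc
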